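/- arXiv:2509.05002 — 3 statements merged into one kernel-verified Lean document; each statement's English description precedes it below -/
import Mathlib

section
/- Let F be an (n, κ, κ²)-splitter on a vertex set V of size n with κ = p + 2. Then the family Q = { f⁻¹(i) ∪ f⁻¹(j) : f ∈ F, i, j ∈ {1,...,κ²} } is a p-Query-Scheme on V. -/
/-- If `F` is an `(n, κ, κ²)`-splitter with `κ = p + 2` (for every `κ`-subset
`S` some `f ∈ F` is injective on `S`), then the family
`{ f⁻¹(i) ∪ f⁻¹(j) : f ∈ F, i j }` is a `p`-Query-Scheme: for all distinct
vertices `u, v, w₁, …, w_p` some set of the family contains `u` and `v` but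
none of the `wᵢ`. -/
theorem stmt_5 {V : Type*} [Fintype V] [DecidableEq V] (n p : ℕ)
    (hn : Fintype.card V = n) (hp : 1 ≤ p) (hpn : p + 2 ≤ n)
    (F : Finset (V → Fin ((p + 2) ^ 2)))
    (hsplit : ∀ S : Finset V, S.card = p + 2 → ∃ f ∈ F, Set.InjOn f ↑S) :
    ∀ u v : V, u ≠ v → ∀ W : Finset V, W.card = p → u ∉ W → v ∉ W →
      ∃ f ∈ F, ∃ i j : Fin ((p + 2) ^ 2),
        u ∈ Finset.univ.filter (fun x => f x = i ∨ f x = j) ∧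
        v ∈ Finset.univ.filter (fun x => f x = i ∨ f x = j) ∧
        Disjoint W (Finset.univ.filter (fun x => f x = i ∨ f x = j)) := by
  intro u v huv W hW huW hvW
  set S : Finset V := insert u (insert v W) with hS
  have hScard : S.card = p + 2 := by
    rw [hS, Finset.card_insert_of_notMem, Finset.card_insert_of_notMem hvW, hW]
    simp [huv, huW]
  obtain ⟨f, hfF, hinj⟩ := hsplit S hScard
  have huS : u ∈ S := by simp [hS]
  have hvS : v ∈ S := by simp [hS]
  refine ⟨f, hfF, f u, f v, by simp, by simp, ?_⟩
  rw [Finset.disjoint_left]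
  intro w hwW hw
  have hwS : w ∈ S := by simp [hS, hwW]
  simp only [Finset.mem_filter] at hw
  rcases hw.2 with h | h
  · exact huW (hinj hwS huS h ▸ hwW)
  · exact hvW (hinj hwS hvS h ▸ hwW)
end

section
/- Let G = (V, E) be a k-tree (a maximal graph of treewidth k) and let u, v ∈ V with uv ∉ E. Then there exists a set S ⊆ V \ {u, v} with |S| = k such that u and v lie in different connected components of the induced subgraph G[V \ S]. -/
/-- `(tT, X)` is a tree decomposition of `G`: `tT` is a tree, the bags `X`
cover all vertices and all edges, and for each vertex the set of bags
containing it induces a connected subgraph of the tree. -/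
def IsTreeDecomp {V T : Type*} (G : SimpleGraph V) (tT : SimpleGraph T)
    (X : T → Finset V) : Prop :=
  tT.IsTree ∧
  (∀ v : V, ∃ t : T, v ∈ X t) ∧
  (∀ u v : V, G.Adj u v → ∃ t : T, u ∈ X t ∧ v ∈ X t) ∧
  (∀ v : V, (tT.induce {t : T | v ∈ X t}).Connected)

/-- `G` has treewidth at most `k`: some tree decomposition has all bags of
size at most `k + 1`. -/
def TreewidthAtMost {V : Type*} (G : SimpleGraph V) (k : ℕ) : Prop :=
  ∃ (T : Type) (tT : SimpleGraph T) (X : T → Finset V),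
    IsTreeDecomp G tT X ∧ ∀ t : T, (X t).card ≤ k + 1

open SimpleGraph

/-- Walks in an induced subgraph give reachability in any graph containing the
relevant edges. -/
lemma walk_induce_reachable {T : Type*} {tT G' : SimpleGraph T} {s : Set T}
    (hG' : ∀ x y : s, tT.Adj x y → G'.Adj x y) :
    ∀ {a b : s}, (tT.induce s).Walk a b → G'.Reachable (a : T) (b : T) := by
  intro a b p
  induction p with
  | nil => exact Reachable.refl _
  | cons h q ih => exact (Adj.reachable (hG' _ _ h)).trans ih

/-- In a `k`-tree (a graph of treewidth at most `k` to which no edge can be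
added without exceeding treewidth `k`), any two non-adjacent vertices `u ≠ v`
can be separated by a set `S` of exactly `k` vertices avoiding `u` and `v`. -/
theorem stmt_6 {V : Type*} [Fintype V] [DecidableEq V] (G : SimpleGraph V)
    (k : ℕ) (htw : TreewidthAtMost G k)
    (hmax : ∀ u v : V, u ≠ v → ¬ G.Adj u v →
      ¬ TreewidthAtMost (G ⊔ SimpleGraph.fromEdgeSet {s(u, v)}) k)
    (u v : V) (huv : u ≠ v) (hadj : ¬ G.Adj u v) :
    ∃ S : Finset V, S.card = k ∧ ∃ (hu : u ∉ S) (hv : v ∉ S),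
      ¬ (G.induce {x : V | x ∉ S}).Reachable ⟨u, hu⟩ ⟨v, hv⟩ := by
  obtain ⟨T, tT, X, ⟨htree, hcover, hedge, hconn⟩, hsize⟩ := htw
  -- card of V is at least k + 2
  have hcard : k + 2 ≤ Fintype.card V := by
    by_contra h
    push_neg at h
    apply hmax u v huv hadj
    refine ⟨PUnit, ⊥, fun _ => Finset.univ, ⟨?_, ?_, ?_, ?_⟩, ?_⟩
    · refine ⟨⟨fun a b => ?_⟩, isAcyclic_bot⟩
      have : a = b := Subsingleton.elim a b
      subst this; exact Reachable.refl _
    · intro w; exact ⟨PUnit.unit, Finset.mem_univ w⟩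
    · intro a b _; exact ⟨PUnit.unit, Finset.mem_univ a, Finset.mem_univ b⟩
    · intro w
      have : Nonempty {t : PUnit | w ∈ (fun _ => (Finset.univ : Finset V)) t} :=
        ⟨⟨PUnit.unit, Finset.mem_univ w⟩⟩
      refine ⟨fun a b => ?_⟩
      have : a = b := Subsingleton.elim a b
      subst this; exact Reachable.refl _
    · intro t
      simpa using Nat.le_of_lt_succ h
  -- no bag contains both u and v
  have hnobag : ∀ t : T, ¬ (u ∈ X t ∧ v ∈ X t) := by
    rintro t ⟨hut, hvt⟩
    apply hmax u v huv hadj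
    refine ⟨T, tT, X, ⟨htree, hcover, ?_, hconn⟩, hsize⟩
    intro a b hab
    rcases hab with hab | hab
    · exact hedge a b hab
    · rw [fromEdgeSet_adj, Set.mem_singleton_iff, Sym2.eq_iff] at hab
      rcases hab.1 with ⟨rfl, rfl⟩ | ⟨rfl, rfl⟩
      · exact ⟨t, hut, hvt⟩
      · exact ⟨t, hvt, hut⟩
  have htc : tT.Connected := htree.1
  -- choose bags for u and v at minimal tree distance
  have hne : Nonempty T := htc.nonempty
  set D : Set ℕ := {n | ∃ a b : T, u ∈ X a ∧ v ∈ X b ∧ tT.dist a b = n} with hD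
  have hDne : D.Nonempty := by
    obtain ⟨a, ha⟩ := hcover u
    obtain ⟨b, hb⟩ := hcover v
    exact ⟨tT.dist a b, a, b, ha, hb, rfl⟩
  obtain ⟨tu, tv, hutu, hvtv, hdist⟩ : sInf D ∈ D := Nat.sInf_mem hDne
  have hdpos : 0 < sInf D := by
    rw [← hdist]
    refine Nat.pos_of_ne_zero fun h0 => ?_
    have : tu = tv := (htc.dist_eq_zero_iff).mp h0
    exact hnobag tu ⟨hutu, this ▸ hvtv⟩
  obtain ⟨p, hp⟩ := htc.exists_walk_length_eq_dist tu tv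
  have hpath : p.IsPath := p.isPath_of_length_eq_dist (hp.trans rfl)
  -- p is nonempty; let t1 be its second vertex
  cases p with
  | nil => rw [hdist] at hp; simp at hp; omega
  | cons hadj1 q =>
    rename_i t1
    rw [Walk.cons_isPath_iff] at hpath
    have hqlen : q.length = sInf D - 1 := by
      have := hp; rw [hdist] at this; simp [Walk.length_cons] at this; omega
    -- u is not in the bag of t1
    have hut1 : u ∉ X t1 := by
      intro hu1
      have hmem : tT.dist t1 tv ∈ D := ⟨t1, tv, hu1, hvtv, rfl⟩
      have h1 : sInf D ≤ tT.dist t1 tv := Nat.sInf_le hmem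
      have h2 : tT.dist t1 tv ≤ q.length := SimpleGraph.dist_le q
      omega
    have hvtu : v ∉ X tu := fun hv' => hnobag tu ⟨hutu, hv'⟩
    -- the separator inside the bag of tu
    set S0 : Finset V := X tu ∩ X t1 with hS0
    have huS0 : u ∉ S0 := fun h => hut1 (Finset.mem_inter.mp h).2
    have hvS0 : v ∉ S0 := fun h => hvtu (Finset.mem_inter.mp h).1
    have hS0card : S0.card ≤ k := by
      have hsub : S0 ⊆ (X tu).erase u := fun x hx =>
        Finset.mem_erase.mpr ⟨fun hxu => huS0 (hxu ▸ hx), (Finset.mem_inter.mp hx).1⟩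
      calc S0.card ≤ ((X tu).erase u).card := Finset.card_le_card hsub
        _ = (X tu).card - 1 := Finset.card_erase_of_mem hutu
        _ ≤ k := by have := hsize tu; omega
    -- pad S0 to a set S of size k avoiding u and v
    obtain ⟨S, hS0S, hSsub, hScard⟩ :=
      Finset.exists_subsuperset_card_eq
        (show S0 ⊆ (Finset.univ : Finset V) \ {u, v} by
          intro x hx
          simp only [Finset.mem_sdiff, Finset.mem_univ, Finset.mem_insert,
            Finset.mem_singleton, true_and]
          rintro (rfl | rfl); exacts [huS0 hx, hvS0 hx])
        hS0card
        (by
          have : ((Finset.univ : Finset V) \ {u, v}).card = Fintype.card V - 2 := by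
            rw [Finset.card_sdiff_of_subset (by simp)]
            simp [Finset.card_insert_of_notMem, huv, Finset.card_univ]
          omega)
    have huS : u ∉ S := fun h => by simpa [huv] using hSsub h
    have hvS : v ∉ S := fun h => by simpa [huv] using hSsub h
    refine ⟨S, hScard, huS, hvS, ?_⟩
    -- the deleted-edge tree
    set G' : SimpleGraph T := tT \ fromEdgeSet {s(tu, t1)} with hG'
    have hbridge : ¬ G'.Reachable tu t1 := by
      have := (isAcyclic_iff_forall_adj_isBridge.mp htree.2) hadj1
      exact isBridge_iff.mp this
    -- key reachability lemma within bags of a vertex avoiding S0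
    have L1 : ∀ w : V, w ∉ S0 → ∀ t t' : T, w ∈ X t → w ∈ X t' → G'.Reachable t t' := by
      intro w hw t t' ht ht'
      obtain ⟨wk⟩ := (hconn w) ⟨t, ht⟩ ⟨t', ht'⟩
      refine walk_induce_reachable ?_ wk
      rintro ⟨x, hx⟩ ⟨y, hy⟩ hxy
      refine ⟨hxy, ?_⟩
      rw [fromEdgeSet_adj]
      rintro ⟨h1, -⟩
      rw [Set.mem_singleton_iff, Sym2.eq_iff] at h1
      rcases h1 with ⟨rfl, rfl⟩ | ⟨rfl, rfl⟩
      · exact hw (Finset.mem_inter.mpr ⟨hx, hy⟩)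
      · exact hw (Finset.mem_inter.mpr ⟨hy, hx⟩)
    -- t1 reaches tv in G'
    have ht1tv : G'.Reachable t1 tv := by
      refine ⟨q.transfer G' ?_⟩
      intro e he
      have heT : e ∈ tT.edgeSet := q.edges_subset_edgeSet he
      have hne' : e ≠ s(tu, t1) := by
        rintro rfl
        exact hpath.2 (q.fst_mem_support_of_mem_edges he)
      rw [hG', edgeSet_sdiff, Set.mem_diff, edgeSet_fromEdgeSet]
      exact ⟨heT, fun h => hne' h.1⟩
    have hnotutv : ¬ G'.Reachable tu tv := fun h => hbridge (h.trans ht1tv.symm)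
    -- final separation argument
    rintro ⟨wp⟩
    have key : ∀ (a b : {x : V | x ∉ S}) (wp : (G.induce {x : V | x ∉ S}).Walk a b),
        (∃ t : T, (a : V) ∈ X t ∧ G'.Reachable tu t) →
        ∃ t : T, (b : V) ∈ X t ∧ G'.Reachable tu t := by
      intro a b wp
      induction wp with
      | nil => exact id
      | @cons a c b h q ih =>
        rintro ⟨t, hat, hr⟩
        have hGadj : G.Adj (a : V) (c : V) := h
        obtain ⟨t', hat', hct'⟩ := hedge _ _ hGadj
        have haS0 : (a : V) ∉ S0 := fun h' => a.2 (hS0S h')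
        exact ih ⟨t', hct', hr.trans (L1 a haS0 t t' hat hat')⟩
    obtain ⟨t, hvt, hreach⟩ := key _ _ wp ⟨tu, hutu, Reachable.refl _⟩
    have : G'.Reachable t tv := L1 v (fun h => hvS (hS0S h)) t tv hvt hvtv
    exact hnotutv (hreach.trans this)
end

section
/- Fix disjoint vertex sets C₁, C₂ ⊆ V each of size η, and let 𝒢_η be the family of graphs on V in which C₁ and C₂ each induce a clique, there are no edges incident to V \ (C₁ ∪ C₂), and the edges between C₁ and C₂ are arbitrary. For any graph G ∈ 𝒢_η and any query set S ⊆ V, the partition of S into connected components of G[S] is one of exactly at most two possibilities: either the components are the singletons of S \ (C₁∪C₂) together with S ∩ C₁ and S ∩ C₂ separately (when nonempty), or the singletons of S \ (C₁∪C₂) together with (S ∩ C₁) ∪ (S ∩ C₂) as one component. -/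
/-- For any graph `G` of the family `𝒢_η` (two disjoint `η`-cliques `C₁`, `C₂`
with arbitrary edges in between and no other edges), and any query set `S`,
the partition of `S` into connected components of `G[S]` is one of at most two
possibilities: the reachability relation of `G.induce S` either identifies
exactly the vertices of `S ∩ C₁` with each other and those of `S ∩ C₂` with
each other (all other vertices being isolated), or it merges
`(S ∩ C₁) ∪ (S ∩ C₂)` into a single component (all other vertices isolated). -/
theorem stmt_14 {V : Type*} [DecidableEq V] (C₁ C₂ : Finset V) (η : ℕ)
    (hC₁ : C₁.card = η) (hC₂ : C₂.card = η) (hdisj : Disjoint C₁ C₂)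
    (G : SimpleGraph V)
    (hclique1 : ∀ u ∈ C₁, ∀ v ∈ C₁, u ≠ v → G.Adj u v)
    (hclique2 : ∀ u ∈ C₂, ∀ v ∈ C₂, u ≠ v → G.Adj u v)
    (hsupp : ∀ u v : V, G.Adj u v → (u ∈ C₁ ∪ C₂ ∧ v ∈ C₁ ∪ C₂))
    (S : Set V) :
    (∀ x y : S, (G.induce S).Reachable x y ↔
        x = y ∨ ((x : V) ∈ C₁ ∧ (y : V) ∈ C₁) ∨ ((x : V) ∈ C₂ ∧ (y : V) ∈ C₂)) ∨
    (∀ x y : S, (G.induce S).Reachable x y ↔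
        x = y ∨ ((x : V) ∈ C₁ ∪ C₂ ∧ (y : V) ∈ C₁ ∪ C₂)) := by
  classical
  -- adjacency in the induced graph
  have hadj : ∀ x y : S, (G.induce S).Adj x y ↔ G.Adj x y := by
    intro x y; rfl
  have hne : ∀ {x y : S}, G.Adj (x : V) y → x ≠ y := by
    intro x y h hxy
    exact G.ne_of_adj h (by rw [hxy])
  -- if two vertices of S are in the same clique, they are reachable
  have hreach1 : ∀ x y : S, (x : V) ∈ C₁ → (y : V) ∈ C₁ →
      (G.induce S).Reachable x y := by
    intro x y hx hy
    by_cases hxy : x = y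
    · rw [hxy]
    · exact ((hadj x y).2 (hclique1 _ hx _ hy (fun h => hxy (Subtype.ext h)))).reachable
  have hreach2 : ∀ x y : S, (x : V) ∈ C₂ → (y : V) ∈ C₂ →
      (G.induce S).Reachable x y := by
    intro x y hx hy
    by_cases hxy : x = y
    · rw [hxy]
    · exact ((hadj x y).2 (hclique2 _ hx _ hy (fun h => hxy (Subtype.ext h)))).reachable
  by_cases hcross : ∃ a b : S, (a : V) ∈ C₁ ∧ (b : V) ∈ C₂ ∧ G.Adj (a : V) b
  · -- merged case
    obtain ⟨a, b, ha, hb, hab⟩ := hcross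
    right
    intro x y
    constructor
    · intro h
      rw [SimpleGraph.reachable_iff_reflTransGen] at h
      induction h with
      | refl => exact Or.inl rfl
      | tail hxc hcy ih =>
        rename_i c d
        rw [hadj] at hcy
        have hmem := hsupp _ _ hcy
        rcases ih with rfl | ⟨hx, _⟩
        · exact Or.inr ⟨hmem.1, hmem.2⟩
        · exact Or.inr ⟨hx, hmem.2⟩
    · rintro (rfl | ⟨hx, hy⟩)
      · exact SimpleGraph.Reachable.refl x
      · have key : ∀ z : S, (z : V) ∈ C₁ ∪ C₂ → (G.induce S).Reachable z a := by
          intro z hz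
          rcases Finset.mem_union.1 hz with hz1 | hz2
          · exact hreach1 z a hz1 ha
          · exact (hreach2 z b hz2 hb).trans
              (((hadj b a).2 hab.symm).reachable)
        exact (key x hx).trans (key y hy).symm
  · -- separate case
    push_neg at hcross
    left
    intro x y
    constructor
    · intro h
      rw [SimpleGraph.reachable_iff_reflTransGen] at h
      induction h with
      | refl => exact Or.inl rfl
      | tail hxc hcy ih =>
        rename_i c d
        rw [hadj] at hcy
        have hmem := hsupp _ _ hcy
        have hsame : ((c : V) ∈ C₁ ∧ (d : V) ∈ C₁) ∨ ((c : V) ∈ C₂ ∧ (d : V) ∈ C₂) := by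
          rcases Finset.mem_union.1 hmem.1 with hc1 | hc2
          · rcases Finset.mem_union.1 hmem.2 with hy1 | hy2
            · exact Or.inl ⟨hc1, hy1⟩
            · exact absurd hcy (hcross c d hc1 hy2)
          · rcases Finset.mem_union.1 hmem.2 with hy1 | hy2
            · exact absurd hcy.symm (hcross d c hy1 hc2)
            · exact Or.inr ⟨hc2, hy2⟩
        rcases ih with rfl | ⟨hx1, hc1⟩ | ⟨hx2, hc2⟩
        · exact Or.inr (hsame.imp (fun h => ⟨h.1, h.2⟩) (fun h => ⟨h.1, h.2⟩))
        · rcases hsame with ⟨_, hy⟩ | ⟨hc2, _⟩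
          · exact Or.inr (Or.inl ⟨hx1, hy⟩)
          · exact absurd hc2 (Finset.disjoint_left.1 hdisj hc1)
        · rcases hsame with ⟨hc1, _⟩ | ⟨_, hy⟩
          · exact absurd hc2 (Finset.disjoint_left.1 hdisj hc1)
          · exact Or.inr (Or.inr ⟨hx2, hy⟩)
    · rintro (rfl | ⟨hx, hy⟩ | ⟨hx, hy⟩)
      · exact SimpleGraph.Reachable.refl x
      · exact hreach1 x y hx hy
      · exact hreach2 x y hx hy
end
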